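/- Contractivity and unitarity of the boundary-condition map T between deficiency subspaces: let θ₁, θ₂ ∈ ℝ, let μ : (0,∞) → [0,1] be measurable, and let f₁, f₃, f₄, f₅ ∈ L²(ℝ × (0,∞)). Define g₄(a,b) := e^{iθ₂}μ(b)f₁(a,b) − e^{−b/ħ}f₄(a−b,b); g₂(a,b) := e^{iθ₁}μ(b)(f₄(a,b) + e^{−b/ħ}g₄(a+b,b)); g₃(a,b) := e^{iθ₁}μ(b)f₅(a,b) − e^{−b/ħ}f₃(a+b,b); g₆(a,b) := e^{iθ₂}μ(b)(f₃(a,b) + e^{−b/ħ}g₃(a−b,b)). Define Ψ₋ ∈ L²(Ω; ℂ⁸) by ψ_{--+} = e^{−s̃/ħ}f₁(s_p+s̃, s), ψ_{-++} = e^{−s̃/ħ}f₃(s_p+s̃, s+s̃), ψ_{+--} = e^{−s/ħ}f₄(s_p−s, s̃+s), ψ_{+-+} = e^{−s/ħ}f₅(s_p−s, s̃), all other components 0; and define Ψ₊ ∈ L²(Ω; ℂ⁸) by ψ_{-+-} = e^{−s/ħ}g₂(s_p−s, s̃), ψ_{-++} = e^{−s/ħ}g₃(s_p−s, s̃+s),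 ψ_{+--} = e^{−s̃/ħ}g₄(s_p+s̃, s+s̃), ψ_{++-} = e^{−s̃/ħ}g₆(s_p+s̃, s), all other components 0. Then ‖Ψ₊‖_{L²(Ω;ℂ⁸)} ≤ ‖Ψ₋‖_{L²(Ω;ℂ⁸)}, with equality whenever μ ≡ 1. -/

import Mathlib

open Complex MeasureTheory

noncomputable section

/-- The domain `Ω = ℝ × (0,∞) × (0,∞)` with coordinates `(s_p, s, s̃)`. -/
def Omega : Set (Fin 3 → ℝ) := {x | 0 < x 1 ∧ 0 < x 2}

/-- `e^{iθ}`. -/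
def eIθ (θ : ℝ) : ℂ := Complex.exp (θ * Complex.I)

/-- `g₄(a,b) = e^{iθ₂}μ(b)f₁(a,b) − e^{−b/ħ}f₄(a−b,b)`. -/
def g4fun (hbar θ₂ : ℝ) (μ : ℝ → ℝ) (f₁ f₄ : ℝ × ℝ → ℂ) (q : ℝ × ℝ) : ℂ :=
  eIθ θ₂ * ((μ q.2 : ℝ) : ℂ) * f₁ q - ((Real.exp (-q.2 / hbar) : ℝ) : ℂ) * f₄ (q.1 - q.2, q.2)

/-- `g₂(a,b) = e^{iθ₁}μ(b)(f₄(a,b) + e^{−b/ħ}g₄(a+b,b))`. -/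
def g2fun (hbar θ₁ θ₂ : ℝ) (μ : ℝ → ℝ) (f₁ f₄ : ℝ × ℝ → ℂ) (q : ℝ × ℝ) : ℂ :=
  eIθ θ₁ * ((μ q.2 : ℝ) : ℂ) *
    (f₄ q + ((Real.exp (-q.2 / hbar) : ℝ) : ℂ) * g4fun hbar θ₂ μ f₁ f₄ (q.1 + q.2, q.2))

/-- `g₃(a,b) = e^{iθ₁}μ(b)f₅(a,b) − e^{−b/ħ}f₃(a+b,b)`. -/
def g3fun (hbar θ₁ : ℝ) (μ : ℝ → ℝ) (f₃ f₅ : ℝ × ℝ → ℂ) (q : ℝ × ℝ) : ℂ :=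
  eIθ θ₁ * ((μ q.2 : ℝ) : ℂ) * f₅ q - ((Real.exp (-q.2 / hbar) : ℝ) : ℂ) * f₃ (q.1 + q.2, q.2)

/-- `g₆(a,b) = e^{iθ₂}μ(b)(f₃(a,b) + e^{−b/ħ}g₃(a−b,b))`. -/
def g6fun (hbar θ₁ θ₂ : ℝ) (μ : ℝ → ℝ) (f₃ f₅ : ℝ × ℝ → ℂ) (q : ℝ × ℝ) : ℂ :=
  eIθ θ₂ * ((μ q.2 : ℝ) : ℂ) *
    (f₃ q + ((Real.exp (-q.2 / hbar) : ℝ) : ℂ) * g3fun hbar θ₁ μ f₃ f₅ (q.1 - q.2, q.2))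

/-- The squared `L²(Ω; ℂ⁸)` norm of `Ψ₋` (its four nonzero components). -/
def normSqMinus (hbar : ℝ) (f₁ f₃ f₄ f₅ : ℝ × ℝ → ℂ) : ℝ :=
  (∫ x in Omega, ‖((Real.exp (-(x 2) / hbar) : ℝ) : ℂ) * f₁ (x 0 + x 2, x 1)‖ ^ 2) +
  (∫ x in Omega, ‖((Real.exp (-(x 2) / hbar) : ℝ) : ℂ) * f₃ (x 0 + x 2, x 1 + x 2)‖ ^ 2) +
  (∫ x in Omega, ‖((Real.exp (-(x 1) / hbar) : ℝ) : ℂ) * f₄ (x 0 - x 1, x 2 + x 1)‖ ^ 2) +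
  (∫ x in Omega, ‖((Real.exp (-(x 1) / hbar) : ℝ) : ℂ) * f₅ (x 0 - x 1, x 2)‖ ^ 2)

/-- The squared `L²(Ω; ℂ⁸)` norm of `Ψ₊` (its four nonzero components). -/
def normSqPlus (hbar θ₁ θ₂ : ℝ) (μ : ℝ → ℝ) (f₁ f₃ f₄ f₅ : ℝ × ℝ → ℂ) : ℝ :=
  (∫ x in Omega, ‖((Real.exp (-(x 1) / hbar) : ℝ) : ℂ) *
      g2fun hbar θ₁ θ₂ μ f₁ f₄ (x 0 - x 1, x 2)‖ ^ 2) +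
  (∫ x in Omega, ‖((Real.exp (-(x 1) / hbar) : ℝ) : ℂ) *
      g3fun hbar θ₁ μ f₃ f₅ (x 0 - x 1, x 2 + x 1)‖ ^ 2) +
  (∫ x in Omega, ‖((Real.exp (-(x 2) / hbar) : ℝ) : ℂ) *
      g4fun hbar θ₂ μ f₁ f₄ (x 0 + x 2, x 1 + x 2)‖ ^ 2) +
  (∫ x in Omega, ‖((Real.exp (-(x 2) / hbar) : ℝ) : ℂ) *
      g6fun hbar θ₁ θ₂ μ f₃ f₅ (x 0 + x 2, x 1)‖ ^ 2)

/-! ### Auxiliary lemmas -/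

open Set ENNReal

namespace BMCaux

/-! #### Algebra -/

lemma normc_sq (z : ℂ) : ‖z‖^2 = z.re^2 + z.im^2 := by
  rw [Complex.sq_norm, Complex.normSq_apply]; ring

lemma norm_eIθ (θ : ℝ) : ‖eIθ θ‖ = 1 := by
  rw [eIθ, Complex.norm_exp_ofReal_mul_I]

lemma key_le (m ε θ : ℝ) (hm0 : 0 ≤ m) (hm1 : m ≤ 1) (u v : ℂ) :
    m^2 * ‖v + (ε:ℂ) * ((m:ℂ) * (eIθ θ * u) - (ε:ℂ) * v)‖^2
      + (1 - ε^2) * ‖(m:ℂ) * (eIθ θ * u) - (ε:ℂ) * v‖^2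
      ≤ ‖u‖^2 + (1 - ε^2) * ‖v‖^2 := by
  have h1m2 : 0 ≤ 1 - m^2 := by nlinarith
  have hc : ‖eIθ θ * u‖^2 = ‖u‖^2 := by rw [norm_mul, norm_eIθ, one_mul]
  rw [← hc]
  set c : ℂ := eIθ θ * u with hcdef
  simp only [normc_sq, Complex.add_re, Complex.add_im, Complex.sub_re, Complex.sub_im,
    Complex.mul_re, Complex.mul_im, Complex.ofReal_re, Complex.ofReal_im]
  nlinarith [mul_nonneg h1m2 (sq_nonneg (ε*m*c.re + (1-ε^2)*v.re)),
    mul_nonneg h1m2 (sq_nonneg (ε*m*c.im + (1-ε^2)*v.im)),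
    mul_nonneg h1m2 (sq_nonneg c.re), mul_nonneg h1m2 (sq_nonneg c.im)]

lemma key_eq (ε θ : ℝ) (u v : ℂ) :
    ((1:ℝ))^2 * ‖v + (ε:ℂ) * ((((1:ℝ)):ℂ) * (eIθ θ * u) - (ε:ℂ) * v)‖^2
      + (1 - ε^2) * ‖(((1:ℝ)):ℂ) * (eIθ θ * u) - (ε:ℂ) * v‖^2
      = ‖u‖^2 + (1 - ε^2) * ‖v‖^2 := by
  have hc : ‖eIθ θ * u‖^2 = ‖u‖^2 := by rw [norm_mul, norm_eIθ, one_mul]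
  rw [← hc]
  set c : ℂ := eIθ θ * u with hcdef
  simp only [normc_sq, Complex.add_re, Complex.add_im, Complex.sub_re, Complex.sub_im,
    Complex.mul_re, Complex.mul_im, Complex.ofReal_re, Complex.ofReal_im]
  ring

/-! #### One-dimensional integral lemmas -/

lemma lint_shift (g : ℝ → ℝ≥0∞) (c : ℝ) : ∫⁻ a : ℝ, g (a + c) = ∫⁻ a, g a :=
  lintegral_add_right_eq_self g c

lemma lint_Ioi_shift (g : ℝ → ℝ≥0∞) (c : ℝ) :
    ∫⁻ t in Ioi (0:ℝ), g (t + c) = ∫⁻ u in Ioi c, g u := by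
  rw [← lintegral_indicator measurableSet_Ioi, ← lintegral_indicator measurableSet_Ioi,
    ← lint_shift (fun t => (Ioi c).indicator g t) c]
  refine lintegral_congr fun t => ?_
  simp only [Set.indicator_apply, Set.mem_Ioi, lt_add_iff_pos_left]

lemma ofReal_norm_mul_sq (r : ℝ) (z : ℂ) :
    ENNReal.ofReal (‖((r:ℝ):ℂ) * z‖^2) = ENNReal.ofReal (r^2) * ENNReal.ofReal (‖z‖^2) := by
  rw [norm_mul, mul_pow, Complex.norm_real, Real.norm_eq_abs, _root_.sq_abs,
    ENNReal.ofReal_mul (sq_nonneg r)]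

lemma meas_weight {hbar : ℝ} : Measurable fun w : ℝ => ENNReal.ofReal (Real.exp (-w/hbar)^2) := by
  fun_prop

lemma exp_sq (x : ℝ) : Real.exp x ^ 2 = Real.exp (2 * x) := by
  rw [two_mul, Real.exp_add]; ring

variable {hbar : ℝ}

lemma exp_neg_le_one (hh : 0 < hbar) {u : ℝ} (hu : 0 ≤ u) :
    Real.exp (-u/hbar) ≤ 1 := by
  rw [← Real.exp_zero]
  apply Real.exp_le_exp.mpr
  have : 0 ≤ u / hbar := by positivity
  simp [neg_div]; linarith

lemma expInt (hh : 0 < hbar) (u : ℝ) :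
    ∫⁻ c in Ioi u, ENNReal.ofReal (Real.exp (-c/hbar) ^ 2)
      = ENNReal.ofReal (hbar/2 * Real.exp (-u/hbar) ^ 2) := by
  have h1 : ∀ c : ℝ, Real.exp (-c/hbar) ^ 2 = Real.exp (-(2/hbar * c)) := by
    intro c; rw [exp_sq]; ring_nf
  simp only [h1]
  have hb : 0 < 2/hbar := by positivity
  have hint : IntegrableOn (fun c : ℝ => Real.exp (-(2/hbar * c))) (Ioi u) := by
    simpa [mul_comm] using exp_neg_integrableOn_Ioi u hb
  rw [← ofReal_integral_eq_lintegral_ofReal hint (ae_of_all _ fun c => (Real.exp_pos _).le)]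
  congr 1
  have := integral_comp_mul_left_Ioi (fun x => Real.exp (-x)) u hb
  simp only [smul_eq_mul] at this
  rw [this, integral_exp_neg_Ioi, inv_div]

lemma expIntIoo (hh : 0 < hbar) {u : ℝ} (hu : 0 < u) :
    ∫⁻ c in Ioo (0:ℝ) u, ENNReal.ofReal (Real.exp (-c/hbar) ^ 2)
      = ENNReal.ofReal (hbar/2 * (1 - Real.exp (-u/hbar) ^ 2)) := by
  set W : ℝ → ℝ≥0∞ := fun c => ENNReal.ofReal (Real.exp (-c/hbar) ^ 2) with hW
  have he1 : Real.exp (-u/hbar) ≤ 1 := exp_neg_le_one hh hu.le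
  have he0 : (0:ℝ) ≤ Real.exp (-u/hbar) := (Real.exp_pos _).le
  have hsq : Real.exp (-u/hbar) ^ 2 ≤ 1 := by nlinarith
  have hsplit : (∫⁻ c in Ioo (0:ℝ) u, W c) + ∫⁻ c in Ici u, W c = ENNReal.ofReal (hbar/2) := by
    have hu2 := lintegral_union (f := W) (μ := volume) (A := Ioo 0 u) measurableSet_Ici
      ((Iio_disjoint_Ici le_rfl).mono_left Ioo_subset_Iio_self)
    rw [Ioo_union_Ici_eq_Ioi hu] at hu2
    rw [← hu2]
    have := expInt hh 0
    simpa using this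
  have hIci : ∫⁻ c in Ici u, W c = ENNReal.ofReal (hbar/2 * Real.exp (-u/hbar) ^ 2) := by
    rw [← Measure.restrict_congr_set Ioi_ae_eq_Ici]
    exact expInt hh u
  have hkey : ENNReal.ofReal (hbar/2 * (1 - Real.exp (-u/hbar) ^ 2))
      + ENNReal.ofReal (hbar/2 * Real.exp (-u/hbar) ^ 2) = ENNReal.ofReal (hbar/2) := by
    rw [← ENNReal.ofReal_add (by nlinarith) (by positivity)]
    ring_nf
  rw [hIci] at hsplit
  have := hsplit.trans hkey.symm
  exact (ENNReal.add_left_inj ENNReal.ofReal_ne_top).mp this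

/-! #### The parametrization of `Ω` -/

def fin3E : (ℝ × (ℝ × ℝ)) ≃ᵐ (Fin 3 → ℝ) :=
  ((MeasurableEquiv.refl ℝ).prodCongr (MeasurableEquiv.finTwoArrow).symm).trans
    (MeasurableEquiv.piFinSuccAbove (fun _ : Fin 3 => ℝ) 0).symm

lemma fin3E_apply (p : ℝ × ℝ × ℝ) : fin3E p = ![p.1, p.2.1, p.2.2] := by
  funext i; fin_cases i <;> rfl

lemma fin3E_mp : MeasurePreserving fin3E volume volume :=
  ((volume_preserving_piFinSuccAbove (fun _ : Fin 3 => ℝ) 0).symm _).comp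
    ((MeasurePreserving.id volume).prod ((volume_preserving_finTwoArrow ℝ).symm _))

lemma master (F : (Fin 3 → ℝ) → ℝ≥0∞) (hF : Measurable F) :
    ∫⁻ x in Omega, F x
      = ∫⁻ b in Ioi (0:ℝ), ∫⁻ c in Ioi (0:ℝ), ∫⁻ a : ℝ, F ![a, b, c] := by
  have hpre : fin3E ⁻¹' Omega = univ ×ˢ (Ioi (0:ℝ) ×ˢ Ioi (0:ℝ)) := by
    ext p; simp [Omega, fin3E_apply, Set.mem_prod]
  have h := fin3E_mp.setLIntegral_comp_preimage_emb fin3E.measurableEmbedding F Omega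
  rw [← h, hpre]
  have hres : (volume : Measure (ℝ × ℝ × ℝ)).restrict (univ ×ˢ (Ioi (0:ℝ) ×ˢ Ioi (0:ℝ)))
      = (volume : Measure ℝ).prod
          (((volume : Measure ℝ).restrict (Ioi 0)).prod ((volume : Measure ℝ).restrict (Ioi 0))) := by
    rw [Measure.volume_eq_prod, ← Measure.prod_restrict, Measure.restrict_univ]
    congr 1
    rw [Measure.volume_eq_prod, ← Measure.prod_restrict]
  rw [hres]
  have hFc : Measurable fun p : ℝ × ℝ × ℝ => F (fin3E p) := hF.comp fin3E.measurable
  rw [lintegral_prod_symm _ hFc.aemeasurable]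
  rw [lintegral_prod _ hFc.lintegral_prod_left'.aemeasurable]
  refine lintegral_congr fun b => lintegral_congr fun c => lintegral_congr fun a => ?_
  rw [fin3E_apply]

lemma masterB (F : (Fin 3 → ℝ) → ℝ≥0∞) (hF : Measurable F) :
    ∫⁻ x in Omega, F x
      = ∫⁻ c in Ioi (0:ℝ), ∫⁻ b in Ioi (0:ℝ), ∫⁻ a : ℝ, F ![a, b, c] := by
  rw [master F hF]
  have hFc : Measurable fun p : ℝ × ℝ × ℝ => F (fin3E p) := hF.comp fin3E.measurable
  simp only [fin3E_apply] at hFc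
  exact lintegral_lintegral_swap hFc.lintegral_prod_left'.aemeasurable

/-! #### The two reduction lemmas -/

lemma redI (hh : 0 < hbar) (h : ℝ × ℝ → ℂ) (σ : ℝ) :
    (∫⁻ w in Ioi (0:ℝ), ∫⁻ t in Ioi (0:ℝ), ∫⁻ a : ℝ,
        ENNReal.ofReal (‖((Real.exp (-w/hbar) : ℝ) : ℂ) * h (a + σ * w, t)‖^2))
      = ENNReal.ofReal (hbar/2)
          * ∫⁻ t in Ioi (0:ℝ), ∫⁻ a : ℝ, ENNReal.ofReal (‖h (a, t)‖^2) := by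
  have step : ∀ w : ℝ,
      (∫⁻ t in Ioi (0:ℝ), ∫⁻ a : ℝ,
        ENNReal.ofReal (‖((Real.exp (-w/hbar) : ℝ) : ℂ) * h (a + σ * w, t)‖^2))
      = ENNReal.ofReal (Real.exp (-w/hbar)^2)
          * ∫⁻ t in Ioi (0:ℝ), ∫⁻ a : ℝ, ENNReal.ofReal (‖h (a, t)‖^2) := by
    intro w
    rw [← lintegral_const_mul' _ _ ENNReal.ofReal_ne_top]
    refine lintegral_congr fun t => ?_
    calc ∫⁻ a : ℝ, ENNReal.ofReal (‖((Real.exp (-w/hbar) : ℝ) : ℂ) * h (a + σ * w, t)‖^2)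
        = ∫⁻ a : ℝ, ENNReal.ofReal (Real.exp (-w/hbar)^2)
            * ENNReal.ofReal (‖h (a + σ * w, t)‖^2) :=
          lintegral_congr fun a => ofReal_norm_mul_sq _ _
      _ = ENNReal.ofReal (Real.exp (-w/hbar)^2)
            * ∫⁻ a : ℝ, ENNReal.ofReal (‖h (a + σ * w, t)‖^2) :=
          lintegral_const_mul' _ _ ENNReal.ofReal_ne_top
      _ = ENNReal.ofReal (Real.exp (-w/hbar)^2)
            * ∫⁻ a : ℝ, ENNReal.ofReal (‖h (a, t)‖^2) := by
          rw [lint_shift (fun a => ENNReal.ofReal (‖h (a, t)‖^2)) (σ * w)]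
  rw [lintegral_congr step, lintegral_mul_const _ meas_weight]
  congr 1
  simpa using expInt hh 0

lemma redII (hh : 0 < hbar) (h : ℝ × ℝ → ℂ) (hm : Measurable h) (σ : ℝ) :
    (∫⁻ w in Ioi (0:ℝ), ∫⁻ t in Ioi (0:ℝ), ∫⁻ a : ℝ,
        ENNReal.ofReal (‖((Real.exp (-w/hbar) : ℝ) : ℂ) * h (a + σ * w, t + w)‖^2))
      = ∫⁻ u in Ioi (0:ℝ), ENNReal.ofReal (hbar/2 * (1 - Real.exp (-u/hbar)^2))
          * ∫⁻ a : ℝ, ENNReal.ofReal (‖h (a, u)‖^2) := by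
  set G : ℝ → ℝ≥0∞ := fun u => ∫⁻ a : ℝ, ENNReal.ofReal (‖h (a, u)‖^2) with hG
  have hmp : Measurable fun p : ℝ × ℝ => ENNReal.ofReal (‖h p‖^2) := by fun_prop
  have hGmeas : Measurable G := hmp.lintegral_prod_left'
  have step1 : ∀ w ∈ Ioi (0:ℝ),
      (∫⁻ t in Ioi (0:ℝ), ∫⁻ a : ℝ,
        ENNReal.ofReal (‖((Real.exp (-w/hbar) : ℝ) : ℂ) * h (a + σ * w, t + w)‖^2))
      = ∫⁻ u in Ioi (0:ℝ),
          (Ioi w).indicator (fun x => ENNReal.ofReal (Real.exp (-w/hbar)^2) * G x) u := by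
    intro w hw
    calc (∫⁻ t in Ioi (0:ℝ), ∫⁻ a : ℝ,
        ENNReal.ofReal (‖((Real.exp (-w/hbar) : ℝ) : ℂ) * h (a + σ * w, t + w)‖^2))
        = ∫⁻ t in Ioi (0:ℝ),
            ENNReal.ofReal (Real.exp (-w/hbar)^2) * G (t + w) := by
          refine lintegral_congr fun t => ?_
          calc ∫⁻ a : ℝ, ENNReal.ofReal (‖((Real.exp (-w/hbar) : ℝ) : ℂ) * h (a + σ * w, t + w)‖^2)
              = ∫⁻ a : ℝ, ENNReal.ofReal (Real.exp (-w/hbar)^2)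
                  * ENNReal.ofReal (‖h (a + σ * w, t + w)‖^2) :=
                lintegral_congr fun a => ofReal_norm_mul_sq _ _
            _ = ENNReal.ofReal (Real.exp (-w/hbar)^2)
                  * ∫⁻ a : ℝ, ENNReal.ofReal (‖h (a + σ * w, t + w)‖^2) :=
                lintegral_const_mul' _ _ ENNReal.ofReal_ne_top
            _ = ENNReal.ofReal (Real.exp (-w/hbar)^2) * G (t + w) := by
                rw [lint_shift (fun a => ENNReal.ofReal (‖h (a, t + w)‖^2)) (σ * w)]
      _ = ∫⁻ u in Ioi w, ENNReal.ofReal (Real.exp (-w/hbar)^2) * G u :=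
          lint_Ioi_shift (fun u => ENNReal.ofReal (Real.exp (-w/hbar)^2) * G u) w
      _ = ∫⁻ u in Ioi (0:ℝ),
          (Ioi w).indicator (fun x => ENNReal.ofReal (Real.exp (-w/hbar)^2) * G x) u := by
          rw [lintegral_indicator measurableSet_Ioi, Measure.restrict_restrict measurableSet_Ioi,
            inter_eq_left.mpr (Ioi_subset_Ioi hw.le)]
  rw [setLIntegral_congr_fun measurableSet_Ioi step1]
  have hψ : AEMeasurable (Function.uncurry fun w u =>
      (Ioi w).indicator (fun x => ENNReal.ofReal (Real.exp (-w/hbar)^2) * G x) u)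
      ((volume.restrict (Ioi (0:ℝ))).prod (volume.restrict (Ioi (0:ℝ)))) := by
    have heq : (Function.uncurry fun w u =>
        (Ioi w).indicator (fun x => ENNReal.ofReal (Real.exp (-w/hbar)^2) * G x) u)
        = fun p : ℝ × ℝ => Set.indicator {q : ℝ × ℝ | q.1 < q.2}
            (fun q => ENNReal.ofReal (Real.exp (-q.1/hbar)^2) * G q.2) p := by
      funext p
      by_cases hp : p.1 < p.2 <;>
        simp [Function.uncurry, Set.indicator_apply, hp, Set.mem_Ioi]
    rw [heq]
    exact (((meas_weight.comp measurable_fst).mul (hGmeas.comp measurable_snd)).indicator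
      (measurableSet_lt measurable_fst measurable_snd)).aemeasurable
  rw [lintegral_lintegral_swap hψ]
  refine setLIntegral_congr_fun measurableSet_Ioi (fun u hu => ?_)
  calc ∫⁻ w in Ioi (0:ℝ),
      (Ioi w).indicator (fun x => ENNReal.ofReal (Real.exp (-w/hbar)^2) * G x) u
      = ∫⁻ w in Ioi (0:ℝ),
          (Iio u).indicator (fun w => ENNReal.ofReal (Real.exp (-w/hbar)^2)) w * G u := by
        refine lintegral_congr fun w => ?_
        by_cases hwu : w < u <;>
          simp [Set.indicator_apply, hwu, Set.mem_Ioi, Set.mem_Iio]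
    _ = (∫⁻ w in Ioi (0:ℝ),
          (Iio u).indicator (fun w => ENNReal.ofReal (Real.exp (-w/hbar)^2)) w) * G u :=
        lintegral_mul_const _ (meas_weight.indicator measurableSet_Iio)
    _ = (∫⁻ w in Ioo (0:ℝ) u, ENNReal.ofReal (Real.exp (-w/hbar)^2)) * G u := by
        rw [lintegral_indicator measurableSet_Iio, Measure.restrict_restrict measurableSet_Iio,
          Set.Iio_inter_Ioi]
    _ = ENNReal.ofReal (hbar/2 * (1 - Real.exp (-u/hbar)^2))
          * ∫⁻ a : ℝ, ENNReal.ofReal (‖h (a, u)‖^2) := by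
        rw [expIntIoo hh hu]

end BMCaux
namespace BMCaux

variable {hbar : ℝ}

/-! #### Block reductions -/

lemma blockA_forms (hh : 0 < hbar) (θ₁ θ₂ : ℝ) (μ : ℝ → ℝ) (f₁ f₄ : ℝ × ℝ → ℂ)
    (h1 : Measurable f₁) (h4 : Measurable f₄) (b : ℝ) (hb : 0 < b) (hm0 : 0 ≤ μ b) :
    (ENNReal.ofReal (hbar/2) * (∫⁻ a : ℝ, ENNReal.ofReal (‖g2fun hbar θ₁ θ₂ μ f₁ f₄ (a, b)‖^2))
      + ENNReal.ofReal (hbar/2 * (1 - Real.exp (-b/hbar)^2))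
        * (∫⁻ a : ℝ, ENNReal.ofReal (‖g4fun hbar θ₂ μ f₁ f₄ (a, b)‖^2))
      = ∫⁻ x : ℝ, ENNReal.ofReal (hbar/2 *
          ((μ b)^2 * ‖f₄ (x - b, b) + ((Real.exp (-b/hbar) : ℝ) : ℂ)
              * (((μ b : ℝ) : ℂ) * (eIθ θ₂ * f₁ (x, b))
                - ((Real.exp (-b/hbar) : ℝ) : ℂ) * f₄ (x - b, b))‖^2
            + (1 - Real.exp (-b/hbar)^2) * ‖((μ b : ℝ) : ℂ) * (eIθ θ₂ * f₁ (x, b))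
                - ((Real.exp (-b/hbar) : ℝ) : ℂ) * f₄ (x - b, b)‖^2)))
    ∧ (ENNReal.ofReal (hbar/2) * (∫⁻ a : ℝ, ENNReal.ofReal (‖f₁ (a, b)‖^2))
      + ENNReal.ofReal (hbar/2 * (1 - Real.exp (-b/hbar)^2))
        * (∫⁻ a : ℝ, ENNReal.ofReal (‖f₄ (a, b)‖^2))
      = ∫⁻ x : ℝ, ENNReal.ofReal (hbar/2 *
          (‖f₁ (x, b)‖^2 + (1 - Real.exp (-b/hbar)^2) * ‖f₄ (x - b, b)‖^2))) := by
  have hε0 : (0:ℝ) ≤ Real.exp (-b/hbar) := (Real.exp_pos _).le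
  have hε1 : Real.exp (-b/hbar) ≤ 1 := exp_neg_le_one hh hb.le
  have hW0nn : (0:ℝ) ≤ hbar/2 := by positivity
  have h1me : (0:ℝ) ≤ 1 - Real.exp (-b/hbar)^2 := by nlinarith
  have hW1nn : (0:ℝ) ≤ hbar/2 * (1 - Real.exp (-b/hbar)^2) := mul_nonneg hW0nn h1me
  have hg4 : ∀ x : ℝ, g4fun hbar θ₂ μ f₁ f₄ (x, b)
      = ((μ b : ℝ) : ℂ) * (eIθ θ₂ * f₁ (x, b))
        - ((Real.exp (-b/hbar) : ℝ) : ℂ) * f₄ (x - b, b) := by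
    intro x; simp only [g4fun]; ring
  -- the `g₂` integral
  have hg2int : (∫⁻ a : ℝ, ENNReal.ofReal (‖g2fun hbar θ₁ θ₂ μ f₁ f₄ (a, b)‖^2))
      = ∫⁻ x : ℝ, ENNReal.ofReal ((μ b)^2 * ‖f₄ (x - b, b) + ((Real.exp (-b/hbar) : ℝ) : ℂ)
          * (((μ b : ℝ) : ℂ) * (eIθ θ₂ * f₁ (x, b))
            - ((Real.exp (-b/hbar) : ℝ) : ℂ) * f₄ (x - b, b))‖^2) := by
    rw [← lint_shift (fun x => ENNReal.ofReal ((μ b)^2 * ‖f₄ (x - b, b)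
      + ((Real.exp (-b/hbar) : ℝ) : ℂ) * (((μ b : ℝ) : ℂ) * (eIθ θ₂ * f₁ (x, b))
        - ((Real.exp (-b/hbar) : ℝ) : ℂ) * f₄ (x - b, b))‖^2)) b]
    refine lintegral_congr fun a => congrArg ENNReal.ofReal ?_
    have e1 : g2fun hbar θ₁ θ₂ μ f₁ f₄ (a, b)
        = eIθ θ₁ * ((μ b : ℝ) : ℂ) * (f₄ (a + b - b, b) + ((Real.exp (-b/hbar) : ℝ) : ℂ)
            * (((μ b : ℝ) : ℂ) * (eIθ θ₂ * f₁ (a + b, b))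
              - ((Real.exp (-b/hbar) : ℝ) : ℂ) * f₄ (a + b - b, b))) := by
      simp only [g2fun, hg4, add_sub_cancel_right]
    rw [e1, norm_mul, norm_mul, norm_eIθ, one_mul, Complex.norm_real, Real.norm_eq_abs,
      _root_.abs_of_nonneg hm0, mul_pow]
  -- the `g₄` integral
  have hg4int : (∫⁻ a : ℝ, ENNReal.ofReal (‖g4fun hbar θ₂ μ f₁ f₄ (a, b)‖^2))
      = ∫⁻ x : ℝ, ENNReal.ofReal (‖((μ b : ℝ) : ℂ) * (eIθ θ₂ * f₁ (x, b))
          - ((Real.exp (-b/hbar) : ℝ) : ℂ) * f₄ (x - b, b)‖^2) :=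
    lintegral_congr fun a => by rw [hg4 a]
  -- the `f₄` integral
  have hf4int : (∫⁻ a : ℝ, ENNReal.ofReal (‖f₄ (a, b)‖^2))
      = ∫⁻ x : ℝ, ENNReal.ofReal (‖f₄ (x - b, b)‖^2) := by
    rw [← lint_shift (fun x => ENNReal.ofReal (‖f₄ (x - b, b)‖^2)) b]
    refine lintegral_congr fun a => by rw [add_sub_cancel_right]
  constructor
  · rw [hg2int, hg4int, ← lintegral_const_mul' _ _ ENNReal.ofReal_ne_top,
      ← lintegral_const_mul' _ _ ENNReal.ofReal_ne_top,
      ← lintegral_add_left' (show AEMeasurable (fun x : ℝ =>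
        ENNReal.ofReal (hbar/2) * ENNReal.ofReal ((μ b)^2 * ‖f₄ (x - b, b)
          + ((Real.exp (-b/hbar) : ℝ) : ℂ) * (((μ b : ℝ) : ℂ) * (eIθ θ₂ * f₁ (x, b))
            - ((Real.exp (-b/hbar) : ℝ) : ℂ) * f₄ (x - b, b))‖^2)) volume by fun_prop)]
    refine lintegral_congr fun x => ?_
    rw [← ENNReal.ofReal_mul hW0nn, ← ENNReal.ofReal_mul hW1nn,
      ← ENNReal.ofReal_add (mul_nonneg hW0nn (mul_nonneg (sq_nonneg _) (sq_nonneg _)))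
        (mul_nonneg hW1nn (sq_nonneg _))]
    congr 1
    ring
  · rw [hf4int, ← lintegral_const_mul' _ _ ENNReal.ofReal_ne_top,
      ← lintegral_const_mul' _ _ ENNReal.ofReal_ne_top,
      ← lintegral_add_left' (show AEMeasurable (fun x : ℝ =>
        ENNReal.ofReal (hbar/2) * ENNReal.ofReal (‖f₁ (x, b)‖^2)) volume by fun_prop)]
    refine lintegral_congr fun x => ?_
    rw [← ENNReal.ofReal_mul hW0nn, ← ENNReal.ofReal_mul hW1nn,
      ← ENNReal.ofReal_add (mul_nonneg hW0nn (sq_nonneg _)) (mul_nonneg hW1nn (sq_nonneg _))]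
    congr 1
    ring

end BMCaux
namespace BMCaux

variable {hbar : ℝ}

lemma blockB_forms (hh : 0 < hbar) (θ₁ θ₂ : ℝ) (μ : ℝ → ℝ) (f₃ f₅ : ℝ × ℝ → ℂ)
    (h3 : Measurable f₃) (h5 : Measurable f₅) (b : ℝ) (hb : 0 < b) (hm0 : 0 ≤ μ b) :
    (ENNReal.ofReal (hbar/2) * (∫⁻ a : ℝ, ENNReal.ofReal (‖g6fun hbar θ₁ θ₂ μ f₃ f₅ (a, b)‖^2))
      + ENNReal.ofReal (hbar/2 * (1 - Real.exp (-b/hbar)^2))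
        * (∫⁻ a : ℝ, ENNReal.ofReal (‖g3fun hbar θ₁ μ f₃ f₅ (a, b)‖^2))
      = ∫⁻ x : ℝ, ENNReal.ofReal (hbar/2 *
          ((μ b)^2 * ‖f₃ (x + b, b) + ((Real.exp (-b/hbar) : ℝ) : ℂ)
              * (((μ b : ℝ) : ℂ) * (eIθ θ₁ * f₅ (x, b))
                - ((Real.exp (-b/hbar) : ℝ) : ℂ) * f₃ (x + b, b))‖^2
            + (1 - Real.exp (-b/hbar)^2) * ‖((μ b : ℝ) : ℂ) * (eIθ θ₁ * f₅ (x, b))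
                - ((Real.exp (-b/hbar) : ℝ) : ℂ) * f₃ (x + b, b)‖^2)))
    ∧ (ENNReal.ofReal (hbar/2) * (∫⁻ a : ℝ, ENNReal.ofReal (‖f₅ (a, b)‖^2))
      + ENNReal.ofReal (hbar/2 * (1 - Real.exp (-b/hbar)^2))
        * (∫⁻ a : ℝ, ENNReal.ofReal (‖f₃ (a, b)‖^2))
      = ∫⁻ x : ℝ, ENNReal.ofReal (hbar/2 *
          (‖f₅ (x, b)‖^2 + (1 - Real.exp (-b/hbar)^2) * ‖f₃ (x + b, b)‖^2))) := by
  have hε0 : (0:ℝ) ≤ Real.exp (-b/hbar) := (Real.exp_pos _).le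
  have hε1 : Real.exp (-b/hbar) ≤ 1 := exp_neg_le_one hh hb.le
  have hW0nn : (0:ℝ) ≤ hbar/2 := by positivity
  have h1me : (0:ℝ) ≤ 1 - Real.exp (-b/hbar)^2 := by nlinarith
  have hW1nn : (0:ℝ) ≤ hbar/2 * (1 - Real.exp (-b/hbar)^2) := mul_nonneg hW0nn h1me
  have hg3 : ∀ x : ℝ, g3fun hbar θ₁ μ f₃ f₅ (x, b)
      = ((μ b : ℝ) : ℂ) * (eIθ θ₁ * f₅ (x, b))
        - ((Real.exp (-b/hbar) : ℝ) : ℂ) * f₃ (x + b, b) := by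
    intro x; simp only [g3fun]; ring
  have hg6int : (∫⁻ a : ℝ, ENNReal.ofReal (‖g6fun hbar θ₁ θ₂ μ f₃ f₅ (a, b)‖^2))
      = ∫⁻ x : ℝ, ENNReal.ofReal ((μ b)^2 * ‖f₃ (x + b, b) + ((Real.exp (-b/hbar) : ℝ) : ℂ)
          * (((μ b : ℝ) : ℂ) * (eIθ θ₁ * f₅ (x, b))
            - ((Real.exp (-b/hbar) : ℝ) : ℂ) * f₃ (x + b, b))‖^2) := by
    rw [← lint_shift (fun x => ENNReal.ofReal ((μ b)^2 * ‖f₃ (x + b, b)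
      + ((Real.exp (-b/hbar) : ℝ) : ℂ) * (((μ b : ℝ) : ℂ) * (eIθ θ₁ * f₅ (x, b))
        - ((Real.exp (-b/hbar) : ℝ) : ℂ) * f₃ (x + b, b))‖^2)) (-b)]
    refine lintegral_congr fun a => congrArg ENNReal.ofReal ?_
    have hab : a + -b = a - b := by ring
    rw [hab]
    have e1 : g6fun hbar θ₁ θ₂ μ f₃ f₅ (a, b)
        = eIθ θ₂ * ((μ b : ℝ) : ℂ) * (f₃ (a - b + b, b) + ((Real.exp (-b/hbar) : ℝ) : ℂ)
            * (((μ b : ℝ) : ℂ) * (eIθ θ₁ * f₅ (a - b, b))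
              - ((Real.exp (-b/hbar) : ℝ) : ℂ) * f₃ (a - b + b, b))) := by
      simp only [g6fun, hg3, sub_add_cancel]
    rw [e1, norm_mul, norm_mul, norm_eIθ, one_mul, Complex.norm_real, Real.norm_eq_abs,
      _root_.abs_of_nonneg hm0, mul_pow]
  have hg3int : (∫⁻ a : ℝ, ENNReal.ofReal (‖g3fun hbar θ₁ μ f₃ f₅ (a, b)‖^2))
      = ∫⁻ x : ℝ, ENNReal.ofReal (‖((μ b : ℝ) : ℂ) * (eIθ θ₁ * f₅ (x, b))
          - ((Real.exp (-b/hbar) : ℝ) : ℂ) * f₃ (x + b, b)‖^2) :=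
    lintegral_congr fun a => by rw [hg3 a]
  have hf3int : (∫⁻ a : ℝ, ENNReal.ofReal (‖f₃ (a, b)‖^2))
      = ∫⁻ x : ℝ, ENNReal.ofReal (‖f₃ (x + b, b)‖^2) :=
    (lint_shift (fun x => ENNReal.ofReal (‖f₃ (x, b)‖^2)) b).symm
  constructor
  · rw [hg6int, hg3int, ← lintegral_const_mul' _ _ ENNReal.ofReal_ne_top,
      ← lintegral_const_mul' _ _ ENNReal.ofReal_ne_top,
      ← lintegral_add_left' (show AEMeasurable (fun x : ℝ =>
        ENNReal.ofReal (hbar/2) * ENNReal.ofReal ((μ b)^2 * ‖f₃ (x + b, b)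
          + ((Real.exp (-b/hbar) : ℝ) : ℂ) * (((μ b : ℝ) : ℂ) * (eIθ θ₁ * f₅ (x, b))
            - ((Real.exp (-b/hbar) : ℝ) : ℂ) * f₃ (x + b, b))‖^2)) volume by fun_prop)]
    refine lintegral_congr fun x => ?_
    rw [← ENNReal.ofReal_mul hW0nn, ← ENNReal.ofReal_mul hW1nn,
      ← ENNReal.ofReal_add (mul_nonneg hW0nn (mul_nonneg (sq_nonneg _) (sq_nonneg _)))
        (mul_nonneg hW1nn (sq_nonneg _))]
    congr 1
    ring
  · rw [hf3int, ← lintegral_const_mul' _ _ ENNReal.ofReal_ne_top,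
      ← lintegral_const_mul' _ _ ENNReal.ofReal_ne_top,
      ← lintegral_add_left' (show AEMeasurable (fun x : ℝ =>
        ENNReal.ofReal (hbar/2) * ENNReal.ofReal (‖f₅ (x, b)‖^2)) volume by fun_prop)]
    refine lintegral_congr fun x => ?_
    rw [← ENNReal.ofReal_mul hW0nn, ← ENNReal.ofReal_mul hW1nn,
      ← ENNReal.ofReal_add (mul_nonneg hW0nn (sq_nonneg _)) (mul_nonneg hW1nn (sq_nonneg _))]
    congr 1
    ring

lemma blockA_le (hh : 0 < hbar) (θ₁ θ₂ : ℝ) (μ : ℝ → ℝ) (f₁ f₄ : ℝ × ℝ → ℂ)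
    (h1 : Measurable f₁) (h4 : Measurable f₄) (b : ℝ) (hb : 0 < b)
    (hm0 : 0 ≤ μ b) (hm1 : μ b ≤ 1) :
    ENNReal.ofReal (hbar/2) * (∫⁻ a : ℝ, ENNReal.ofReal (‖g2fun hbar θ₁ θ₂ μ f₁ f₄ (a, b)‖^2))
      + ENNReal.ofReal (hbar/2 * (1 - Real.exp (-b/hbar)^2))
        * (∫⁻ a : ℝ, ENNReal.ofReal (‖g4fun hbar θ₂ μ f₁ f₄ (a, b)‖^2))
    ≤ ENNReal.ofReal (hbar/2) * (∫⁻ a : ℝ, ENNReal.ofReal (‖f₁ (a, b)‖^2))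
      + ENNReal.ofReal (hbar/2 * (1 - Real.exp (-b/hbar)^2))
        * (∫⁻ a : ℝ, ENNReal.ofReal (‖f₄ (a, b)‖^2)) := by
  obtain ⟨hL, hR⟩ := blockA_forms hh θ₁ θ₂ μ f₁ f₄ h1 h4 b hb hm0
  rw [hL, hR]
  refine lintegral_mono fun x => ENNReal.ofReal_le_ofReal ?_
  have hk := key_le (μ b) (Real.exp (-b/hbar)) θ₂ hm0 hm1 (f₁ (x, b)) (f₄ (x - b, b))
  nlinarith [mul_le_mul_of_nonneg_left hk (show (0:ℝ) ≤ hbar/2 by positivity)]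

lemma blockA_eq (hh : 0 < hbar) (θ₁ θ₂ : ℝ) (μ : ℝ → ℝ) (f₁ f₄ : ℝ × ℝ → ℂ)
    (h1 : Measurable f₁) (h4 : Measurable f₄) (b : ℝ) (hb : 0 < b) (hm1 : μ b = 1) :
    ENNReal.ofReal (hbar/2) * (∫⁻ a : ℝ, ENNReal.ofReal (‖g2fun hbar θ₁ θ₂ μ f₁ f₄ (a, b)‖^2))
      + ENNReal.ofReal (hbar/2 * (1 - Real.exp (-b/hbar)^2))
        * (∫⁻ a : ℝ, ENNReal.ofReal (‖g4fun hbar θ₂ μ f₁ f₄ (a, b)‖^2))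
    = ENNReal.ofReal (hbar/2) * (∫⁻ a : ℝ, ENNReal.ofReal (‖f₁ (a, b)‖^2))
      + ENNReal.ofReal (hbar/2 * (1 - Real.exp (-b/hbar)^2))
        * (∫⁻ a : ℝ, ENNReal.ofReal (‖f₄ (a, b)‖^2)) := by
  obtain ⟨hL, hR⟩ := blockA_forms hh θ₁ θ₂ μ f₁ f₄ h1 h4 b hb (by rw [hm1]; norm_num)
  rw [hL, hR]
  refine lintegral_congr fun x => congrArg ENNReal.ofReal ?_
  rw [hm1]
  linear_combination (hbar/2) * key_eq (Real.exp (-b/hbar)) θ₂ (f₁ (x, b)) (f₄ (x - b, b))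

lemma blockB_le (hh : 0 < hbar) (θ₁ θ₂ : ℝ) (μ : ℝ → ℝ) (f₃ f₅ : ℝ × ℝ → ℂ)
    (h3 : Measurable f₃) (h5 : Measurable f₅) (b : ℝ) (hb : 0 < b)
    (hm0 : 0 ≤ μ b) (hm1 : μ b ≤ 1) :
    ENNReal.ofReal (hbar/2) * (∫⁻ a : ℝ, ENNReal.ofReal (‖g6fun hbar θ₁ θ₂ μ f₃ f₅ (a, b)‖^2))
      + ENNReal.ofReal (hbar/2 * (1 - Real.exp (-b/hbar)^2))
        * (∫⁻ a : ℝ, ENNReal.ofReal (‖g3fun hbar θ₁ μ f₃ f₅ (a, b)‖^2))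
    ≤ ENNReal.ofReal (hbar/2) * (∫⁻ a : ℝ, ENNReal.ofReal (‖f₅ (a, b)‖^2))
      + ENNReal.ofReal (hbar/2 * (1 - Real.exp (-b/hbar)^2))
        * (∫⁻ a : ℝ, ENNReal.ofReal (‖f₃ (a, b)‖^2)) := by
  obtain ⟨hL, hR⟩ := blockB_forms hh θ₁ θ₂ μ f₃ f₅ h3 h5 b hb hm0
  rw [hL, hR]
  refine lintegral_mono fun x => ENNReal.ofReal_le_ofReal ?_
  have hk := key_le (μ b) (Real.exp (-b/hbar)) θ₁ hm0 hm1 (f₅ (x, b)) (f₃ (x + b, b))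
  nlinarith [mul_le_mul_of_nonneg_left hk (show (0:ℝ) ≤ hbar/2 by positivity)]

lemma blockB_eq (hh : 0 < hbar) (θ₁ θ₂ : ℝ) (μ : ℝ → ℝ) (f₃ f₅ : ℝ × ℝ → ℂ)
    (h3 : Measurable f₃) (h5 : Measurable f₅) (b : ℝ) (hb : 0 < b) (hm1 : μ b = 1) :
    ENNReal.ofReal (hbar/2) * (∫⁻ a : ℝ, ENNReal.ofReal (‖g6fun hbar θ₁ θ₂ μ f₃ f₅ (a, b)‖^2))
      + ENNReal.ofReal (hbar/2 * (1 - Real.exp (-b/hbar)^2))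
        * (∫⁻ a : ℝ, ENNReal.ofReal (‖g3fun hbar θ₁ μ f₃ f₅ (a, b)‖^2))
    = ENNReal.ofReal (hbar/2) * (∫⁻ a : ℝ, ENNReal.ofReal (‖f₅ (a, b)‖^2))
      + ENNReal.ofReal (hbar/2 * (1 - Real.exp (-b/hbar)^2))
        * (∫⁻ a : ℝ, ENNReal.ofReal (‖f₃ (a, b)‖^2)) := by
  obtain ⟨hL, hR⟩ := blockB_forms hh θ₁ θ₂ μ f₃ f₅ h3 h5 b hb (by rw [hm1]; norm_num)
  rw [hL, hR]
  refine lintegral_congr fun x => congrArg ENNReal.ofReal ?_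
  rw [hm1]
  linear_combination (hbar/2) * key_eq (Real.exp (-b/hbar)) θ₁ (f₅ (x, b)) (f₃ (x + b, b))

end BMCaux
namespace BMCaux

variable {hbar : ℝ}

lemma I2_repr (h : ℝ × ℝ → ℂ) (hm : Measurable h) :
    (∫⁻ t in Ioi (0:ℝ), ∫⁻ a : ℝ, ENNReal.ofReal (‖h (a, t)‖^2))
      = ∫⁻ q in (univ ×ˢ Ioi (0:ℝ)), ENNReal.ofReal (‖h q‖^2) := by
  have hres : (volume : Measure (ℝ × ℝ)).restrict (univ ×ˢ Ioi (0:ℝ))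
      = (volume : Measure ℝ).prod ((volume : Measure ℝ).restrict (Ioi 0)) := by
    rw [Measure.volume_eq_prod, ← Measure.prod_restrict, Measure.restrict_univ]
  rw [hres]
  exact (lintegral_prod_symm _ (show Measurable fun q : ℝ × ℝ =>
    ENNReal.ofReal (‖h q‖^2) by fun_prop).aemeasurable).symm

lemma I2_lt_top (h : ℝ × ℝ → ℂ) (hm : Measurable h)
    (hmem : MemLp h 2 (volume.restrict (univ ×ˢ Ioi (0:ℝ)))) :
    (∫⁻ t in Ioi (0:ℝ), ∫⁻ a : ℝ, ENNReal.ofReal (‖h (a, t)‖^2)) < ⊤ := by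
  rw [I2_repr h hm]
  have h2 := (eLpNorm_lt_top_iff_lintegral_rpow_enorm_lt_top (p := 2)
    (by norm_num) (by norm_num)).mp hmem.2
  have heq : ∀ q : ℝ × ℝ, ENNReal.ofReal (‖h q‖^2)
      = ‖h q‖ₑ ^ ((2:ℝ≥0∞)).toReal := by
    intro q
    rw [show ((2:ℝ≥0∞)).toReal = ((2:ℕ):ℝ) by norm_num, ENNReal.rpow_natCast,
      ENNReal.ofReal_pow (norm_nonneg _), ofReal_norm_eq_enorm]
  simp only [heq]
  exact h2

lemma combine4 (k1 k2 k3 k4 : ℝ → ℝ≥0∞) (m1 : Measurable k1) (m2 : Measurable k2)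
    (m3 : Measurable k3) :
    (∫⁻ u in Ioi (0:ℝ), k1 u) + (∫⁻ u in Ioi (0:ℝ), k2 u) + (∫⁻ u in Ioi (0:ℝ), k3 u)
        + (∫⁻ u in Ioi (0:ℝ), k4 u)
      = ∫⁻ u in Ioi (0:ℝ), (k1 u + k2 u + k3 u + k4 u) := by
  rw [← lintegral_add_left' m1.aemeasurable, ← lintegral_add_left' (show AEMeasurable (fun u => k1 u + k2 u) _ from (m1.add m2).aemeasurable),
    ← lintegral_add_left' (show AEMeasurable (fun u => k1 u + k2 u + k3 u) _ from ((m1.add m2).add m3).aemeasurable)]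

end BMCaux
namespace BMCaux

variable {hbar : ℝ}

lemma GA_meas (h : ℝ × ℝ → ℂ) (hm : Measurable h) :
    Measurable fun u : ℝ => ∫⁻ a : ℝ, ENNReal.ofReal (‖h (a, u)‖^2) :=
  (show Measurable fun p : ℝ × ℝ => ENNReal.ofReal (‖h p‖^2) by fun_prop).lintegral_prod_left'

lemma W1_meas : Measurable fun u : ℝ =>
    ENNReal.ofReal (hbar/2 * (1 - Real.exp (-u/hbar)^2)) := by fun_prop

lemma sum4 (hA hB hC hD : ℝ × ℝ → ℂ) (mA : Measurable hA) (mB : Measurable hB)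
    (mC : Measurable hC) :
    (ENNReal.ofReal (hbar/2) * ∫⁻ t in Ioi (0:ℝ), ∫⁻ a : ℝ, ENNReal.ofReal (‖hA (a, t)‖^2))
      + (∫⁻ u in Ioi (0:ℝ), ENNReal.ofReal (hbar/2 * (1 - Real.exp (-u/hbar)^2))
          * ∫⁻ a : ℝ, ENNReal.ofReal (‖hB (a, u)‖^2))
      + (∫⁻ u in Ioi (0:ℝ), ENNReal.ofReal (hbar/2 * (1 - Real.exp (-u/hbar)^2))
          * ∫⁻ a : ℝ, ENNReal.ofReal (‖hC (a, u)‖^2))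
      + (ENNReal.ofReal (hbar/2) * ∫⁻ t in Ioi (0:ℝ), ∫⁻ a : ℝ, ENNReal.ofReal (‖hD (a, t)‖^2))
    = ∫⁻ u in Ioi (0:ℝ),
        (ENNReal.ofReal (hbar/2) * (∫⁻ a : ℝ, ENNReal.ofReal (‖hA (a, u)‖^2))
          + ENNReal.ofReal (hbar/2 * (1 - Real.exp (-u/hbar)^2))
              * (∫⁻ a : ℝ, ENNReal.ofReal (‖hB (a, u)‖^2))
          + ENNReal.ofReal (hbar/2 * (1 - Real.exp (-u/hbar)^2))
              * (∫⁻ a : ℝ, ENNReal.ofReal (‖hC (a, u)‖^2))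
          + ENNReal.ofReal (hbar/2) * (∫⁻ a : ℝ, ENNReal.ofReal (‖hD (a, u)‖^2))) := by
  rw [← lintegral_const_mul' _ _ ENNReal.ofReal_ne_top,
    ← lintegral_const_mul' _ _ ENNReal.ofReal_ne_top]
  exact combine4 _ _ _ _ ((GA_meas hA mA).const_mul _)
    (W1_meas.mul (GA_meas hB mB)) (W1_meas.mul (GA_meas hC mC))

end BMCaux

open BMCaux in
/-- Contractivity of the boundary-condition map `T` between the
deficiency subspaces: `‖Ψ₊‖_{L²(Ω;ℂ⁸)} ≤ ‖Ψ₋‖_{L²(Ω;ℂ⁸)}`, with equality when `μ ≡ 1`. -/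
theorem boundary_map_contraction
    (hbar : ℝ) (hhbar : 0 < hbar) (θ₁ θ₂ : ℝ)
    (μ : ℝ → ℝ) (hμmeas : Measurable μ) (hμ01 : ∀ b : ℝ, 0 < b → μ b ∈ Set.Icc (0 : ℝ) 1)
    (f₁ f₃ f₄ f₅ : ℝ × ℝ → ℂ)
    (hf₁ : MemLp f₁ 2 (volume.restrict (Set.univ ×ˢ Set.Ioi (0 : ℝ))))
    (hf₃ : MemLp f₃ 2 (volume.restrict (Set.univ ×ˢ Set.Ioi (0 : ℝ))))
    (hf₄ : MemLp f₄ 2 (volume.restrict (Set.univ ×ˢ Set.Ioi (0 : ℝ))))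
    (hf₅ : MemLp f₅ 2 (volume.restrict (Set.univ ×ˢ Set.Ioi (0 : ℝ))))
    (hmeas : Measurable f₁ ∧ Measurable f₃ ∧ Measurable f₄ ∧ Measurable f₅) :
    Real.sqrt (normSqPlus hbar θ₁ θ₂ μ f₁ f₃ f₄ f₅)
      ≤ Real.sqrt (normSqMinus hbar f₁ f₃ f₄ f₅) ∧
    ((∀ b : ℝ, 0 < b → μ b = 1) →
      Real.sqrt (normSqPlus hbar θ₁ θ₂ μ f₁ f₃ f₄ f₅)
        = Real.sqrt (normSqMinus hbar f₁ f₃ f₄ f₅)) := by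
  obtain ⟨h1m, h3m, h4m, h5m⟩ := hmeas
  have hg4m : Measurable (g4fun hbar θ₂ μ f₁ f₄) := by unfold g4fun; fun_prop
  have hg2m : Measurable (g2fun hbar θ₁ θ₂ μ f₁ f₄) := by unfold g2fun g4fun; fun_prop
  have hg3m : Measurable (g3fun hbar θ₁ μ f₃ f₅) := by unfold g3fun; fun_prop
  have hg6m : Measurable (g6fun hbar θ₁ θ₂ μ f₃ f₅) := by unfold g6fun g3fun; fun_prop
  -- reductions of the eight `Ω`-integrals
  have hM1 : (∫⁻ x in Omega, ENNReal.ofReal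
        (‖((Real.exp (-(x 2) / hbar) : ℝ) : ℂ) * f₁ (x 0 + x 2, x 1)‖ ^ 2))
      = ENNReal.ofReal (hbar/2)
          * ∫⁻ t in Ioi (0:ℝ), ∫⁻ a : ℝ, ENNReal.ofReal (‖f₁ (a, t)‖^2) := by
    rw [masterB _ (by fun_prop)]
    have hr := redI hhbar f₁ 1
    simp only [one_mul] at hr
    rw [← hr]
    exact lintegral_congr fun c => lintegral_congr fun b => lintegral_congr fun a => by simp
  have hM2 : (∫⁻ x in Omega, ENNReal.ofReal
        (‖((Real.exp (-(x 2) / hbar) : ℝ) : ℂ) * f₃ (x 0 + x 2, x 1 + x 2)‖ ^ 2))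
      = ∫⁻ u in Ioi (0:ℝ), ENNReal.ofReal (hbar/2 * (1 - Real.exp (-u/hbar)^2))
          * ∫⁻ a : ℝ, ENNReal.ofReal (‖f₃ (a, u)‖^2) := by
    rw [masterB _ (by fun_prop)]
    have hr := redII hhbar f₃ h3m 1
    simp only [one_mul] at hr
    rw [← hr]
    exact lintegral_congr fun c => lintegral_congr fun b => lintegral_congr fun a => by simp
  have hM3 : (∫⁻ x in Omega, ENNReal.ofReal
        (‖((Real.exp (-(x 1) / hbar) : ℝ) : ℂ) * f₄ (x 0 - x 1, x 2 + x 1)‖ ^ 2))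
      = ∫⁻ u in Ioi (0:ℝ), ENNReal.ofReal (hbar/2 * (1 - Real.exp (-u/hbar)^2))
          * ∫⁻ a : ℝ, ENNReal.ofReal (‖f₄ (a, u)‖^2) := by
    rw [master _ (by fun_prop)]
    have hr := redII hhbar f₄ h4m (-1)
    simp only [neg_one_mul, ← sub_eq_add_neg] at hr
    rw [← hr]
    exact lintegral_congr fun b => lintegral_congr fun c => lintegral_congr fun a => by simp
  have hM4 : (∫⁻ x in Omega, ENNReal.ofReal
        (‖((Real.exp (-(x 1) / hbar) : ℝ) : ℂ) * f₅ (x 0 - x 1, x 2)‖ ^ 2))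
      = ENNReal.ofReal (hbar/2)
          * ∫⁻ t in Ioi (0:ℝ), ∫⁻ a : ℝ, ENNReal.ofReal (‖f₅ (a, t)‖^2) := by
    rw [master _ (by fun_prop)]
    have hr := redI hhbar f₅ (-1)
    simp only [neg_one_mul, ← sub_eq_add_neg] at hr
    rw [← hr]
    exact lintegral_congr fun b => lintegral_congr fun c => lintegral_congr fun a => by simp
  have hP1 : (∫⁻ x in Omega, ENNReal.ofReal
        (‖((Real.exp (-(x 1) / hbar) : ℝ) : ℂ) * g2fun hbar θ₁ θ₂ μ f₁ f₄ (x 0 - x 1, x 2)‖ ^ 2))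
      = ENNReal.ofReal (hbar/2)
          * ∫⁻ t in Ioi (0:ℝ), ∫⁻ a : ℝ,
              ENNReal.ofReal (‖g2fun hbar θ₁ θ₂ μ f₁ f₄ (a, t)‖^2) := by
    rw [master _ (by fun_prop)]
    have hr := redI hhbar (g2fun hbar θ₁ θ₂ μ f₁ f₄) (-1)
    simp only [neg_one_mul, ← sub_eq_add_neg] at hr
    rw [← hr]
    exact lintegral_congr fun b => lintegral_congr fun c => lintegral_congr fun a => by simp
  have hP2 : (∫⁻ x in Omega, ENNReal.ofReal
        (‖((Real.exp (-(x 1) / hbar) : ℝ) : ℂ) * g3fun hbar θ₁ μ f₃ f₅ (x 0 - x 1, x 2 + x 1)‖ ^ 2))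
      = ∫⁻ u in Ioi (0:ℝ), ENNReal.ofReal (hbar/2 * (1 - Real.exp (-u/hbar)^2))
          * ∫⁻ a : ℝ, ENNReal.ofReal (‖g3fun hbar θ₁ μ f₃ f₅ (a, u)‖^2) := by
    rw [master _ (by fun_prop)]
    have hr := redII hhbar (g3fun hbar θ₁ μ f₃ f₅) hg3m (-1)
    simp only [neg_one_mul, ← sub_eq_add_neg] at hr
    rw [← hr]
    exact lintegral_congr fun b => lintegral_congr fun c => lintegral_congr fun a => by simp
  have hP3 : (∫⁻ x in Omega, ENNReal.ofReal
        (‖((Real.exp (-(x 2) / hbar) : ℝ) : ℂ) * g4fun hbar θ₂ μ f₁ f₄ (x 0 + x 2, x 1 + x 2)‖ ^ 2))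
      = ∫⁻ u in Ioi (0:ℝ), ENNReal.ofReal (hbar/2 * (1 - Real.exp (-u/hbar)^2))
          * ∫⁻ a : ℝ, ENNReal.ofReal (‖g4fun hbar θ₂ μ f₁ f₄ (a, u)‖^2) := by
    rw [masterB _ (by fun_prop)]
    have hr := redII hhbar (g4fun hbar θ₂ μ f₁ f₄) hg4m 1
    simp only [one_mul] at hr
    rw [← hr]
    exact lintegral_congr fun c => lintegral_congr fun b => lintegral_congr fun a => by simp
  have hP4 : (∫⁻ x in Omega, ENNReal.ofReal
        (‖((Real.exp (-(x 2) / hbar) : ℝ) : ℂ) * g6fun hbar θ₁ θ₂ μ f₃ f₅ (x 0 + x 2, x 1)‖ ^ 2))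
      = ENNReal.ofReal (hbar/2)
          * ∫⁻ t in Ioi (0:ℝ), ∫⁻ a : ℝ,
              ENNReal.ofReal (‖g6fun hbar θ₁ θ₂ μ f₃ f₅ (a, t)‖^2) := by
    rw [masterB _ (by fun_prop)]
    have hr := redI hhbar (g6fun hbar θ₁ θ₂ μ f₃ f₅) 1
    simp only [one_mul] at hr
    rw [← hr]
    exact lintegral_congr fun c => lintegral_congr fun b => lintegral_congr fun a => by simp
  -- combine the four integrals on each side
  have hMsum := sum4 (hbar := hbar) f₁ f₃ f₄ f₅ h1m h3m h4m
  have hPsum := sum4 (hbar := hbar) (g2fun hbar θ₁ θ₂ μ f₁ f₄) (g3fun hbar θ₁ μ f₃ f₅)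
    (g4fun hbar θ₂ μ f₁ f₄) (g6fun hbar θ₁ θ₂ μ f₃ f₅) hg2m hg3m hg4m
  have hre : ∀ a b c d : ℝ≥0∞, a + b + c + d = (a + c) + (d + b) := fun a b c d => by ring
  -- the central inequality
  have hle : (∫⁻ u in Ioi (0:ℝ),
        (ENNReal.ofReal (hbar/2) * (∫⁻ a : ℝ, ENNReal.ofReal (‖g2fun hbar θ₁ θ₂ μ f₁ f₄ (a, u)‖^2))
          + ENNReal.ofReal (hbar/2 * (1 - Real.exp (-u/hbar)^2))
              * (∫⁻ a : ℝ, ENNReal.ofReal (‖g3fun hbar θ₁ μ f₃ f₅ (a, u)‖^2))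
          + ENNReal.ofReal (hbar/2 * (1 - Real.exp (-u/hbar)^2))
              * (∫⁻ a : ℝ, ENNReal.ofReal (‖g4fun hbar θ₂ μ f₁ f₄ (a, u)‖^2))
          + ENNReal.ofReal (hbar/2) * (∫⁻ a : ℝ, ENNReal.ofReal (‖g6fun hbar θ₁ θ₂ μ f₃ f₅ (a, u)‖^2))))
      ≤ ∫⁻ u in Ioi (0:ℝ),
        (ENNReal.ofReal (hbar/2) * (∫⁻ a : ℝ, ENNReal.ofReal (‖f₁ (a, u)‖^2))
          + ENNReal.ofReal (hbar/2 * (1 - Real.exp (-u/hbar)^2))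
              * (∫⁻ a : ℝ, ENNReal.ofReal (‖f₃ (a, u)‖^2))
          + ENNReal.ofReal (hbar/2 * (1 - Real.exp (-u/hbar)^2))
              * (∫⁻ a : ℝ, ENNReal.ofReal (‖f₄ (a, u)‖^2))
          + ENNReal.ofReal (hbar/2) * (∫⁻ a : ℝ, ENNReal.ofReal (‖f₅ (a, u)‖^2))) := by
    refine lintegral_mono_ae ((ae_restrict_iff' measurableSet_Ioi).mpr (ae_of_all _ fun u hu => ?_))
    have hA := blockA_le hhbar θ₁ θ₂ μ f₁ f₄ h1m h4m u hu (hμ01 u hu).1 (hμ01 u hu).2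
    have hB := blockB_le hhbar θ₁ θ₂ μ f₃ f₅ h3m h5m u hu (hμ01 u hu).1 (hμ01 u hu).2
    rw [hre, hre]
    exact add_le_add hA hB
  -- finiteness of the right-hand side
  have hfinf : ∀ (h : ℝ × ℝ → ℂ), Measurable h →
      MemLp h 2 (volume.restrict (Set.univ ×ˢ Set.Ioi (0:ℝ))) →
      ENNReal.ofReal (hbar/2)
        * (∫⁻ t in Ioi (0:ℝ), ∫⁻ a : ℝ, ENNReal.ofReal (‖h (a, t)‖^2)) ≠ ⊤ :=
    fun h hm hmem => (ENNReal.mul_lt_top ENNReal.ofReal_lt_top (I2_lt_top h hm hmem)).ne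
  have hfinW : ∀ (h : ℝ × ℝ → ℂ), Measurable h →
      MemLp h 2 (volume.restrict (Set.univ ×ˢ Set.Ioi (0:ℝ))) →
      (∫⁻ u in Ioi (0:ℝ), ENNReal.ofReal (hbar/2 * (1 - Real.exp (-u/hbar)^2))
        * ∫⁻ a : ℝ, ENNReal.ofReal (‖h (a, u)‖^2)) ≠ ⊤ := by
    intro h hm hmem
    refine ((lt_of_le_of_lt ?_ (hfinf h hm hmem).lt_top)).ne
    rw [← lintegral_const_mul' _ _ ENNReal.ofReal_ne_top]
    refine lintegral_mono fun u => ?_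
    refine mul_le_mul_left (ENNReal.ofReal_le_ofReal ?_) _
    nlinarith [sq_nonneg (Real.exp (-u/hbar)), hhbar]
  have hM1ne : (∫⁻ x in Omega, ENNReal.ofReal
      (‖((Real.exp (-(x 2) / hbar) : ℝ) : ℂ) * f₁ (x 0 + x 2, x 1)‖ ^ 2)) ≠ ⊤ := by
    rw [hM1]; exact hfinf f₁ h1m hf₁
  have hM2ne : (∫⁻ x in Omega, ENNReal.ofReal
      (‖((Real.exp (-(x 2) / hbar) : ℝ) : ℂ) * f₃ (x 0 + x 2, x 1 + x 2)‖ ^ 2)) ≠ ⊤ := by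
    rw [hM2]; exact hfinW f₃ h3m hf₃
  have hM3ne : (∫⁻ x in Omega, ENNReal.ofReal
      (‖((Real.exp (-(x 1) / hbar) : ℝ) : ℂ) * f₄ (x 0 - x 1, x 2 + x 1)‖ ^ 2)) ≠ ⊤ := by
    rw [hM3]; exact hfinW f₄ h4m hf₄
  have hM4ne : (∫⁻ x in Omega, ENNReal.ofReal
      (‖((Real.exp (-(x 1) / hbar) : ℝ) : ℂ) * f₅ (x 0 - x 1, x 2)‖ ^ 2)) ≠ ⊤ := by
    rw [hM4]; exact hfinf f₅ h5m hf₅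
  have hM12ne := ENNReal.add_ne_top.mpr ⟨hM1ne, hM2ne⟩
  have hM123ne := ENNReal.add_ne_top.mpr ⟨hM12ne, hM3ne⟩
  have hMt := ENNReal.add_ne_top.mpr ⟨hM123ne, hM4ne⟩
  -- total inequality on the Ω-integrals
  have hPleM : (∫⁻ x in Omega, ENNReal.ofReal
        (‖((Real.exp (-(x 1) / hbar) : ℝ) : ℂ) * g2fun hbar θ₁ θ₂ μ f₁ f₄ (x 0 - x 1, x 2)‖ ^ 2))
      + (∫⁻ x in Omega, ENNReal.ofReal
        (‖((Real.exp (-(x 1) / hbar) : ℝ) : ℂ) * g3fun hbar θ₁ μ f₃ f₅ (x 0 - x 1, x 2 + x 1)‖ ^ 2))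
      + (∫⁻ x in Omega, ENNReal.ofReal
        (‖((Real.exp (-(x 2) / hbar) : ℝ) : ℂ) * g4fun hbar θ₂ μ f₁ f₄ (x 0 + x 2, x 1 + x 2)‖ ^ 2))
      + (∫⁻ x in Omega, ENNReal.ofReal
        (‖((Real.exp (-(x 2) / hbar) : ℝ) : ℂ) * g6fun hbar θ₁ θ₂ μ f₃ f₅ (x 0 + x 2, x 1)‖ ^ 2))
      ≤ (∫⁻ x in Omega, ENNReal.ofReal
        (‖((Real.exp (-(x 2) / hbar) : ℝ) : ℂ) * f₁ (x 0 + x 2, x 1)‖ ^ 2))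
      + (∫⁻ x in Omega, ENNReal.ofReal
        (‖((Real.exp (-(x 2) / hbar) : ℝ) : ℂ) * f₃ (x 0 + x 2, x 1 + x 2)‖ ^ 2))
      + (∫⁻ x in Omega, ENNReal.ofReal
        (‖((Real.exp (-(x 1) / hbar) : ℝ) : ℂ) * f₄ (x 0 - x 1, x 2 + x 1)‖ ^ 2))
      + (∫⁻ x in Omega, ENNReal.ofReal
        (‖((Real.exp (-(x 1) / hbar) : ℝ) : ℂ) * f₅ (x 0 - x 1, x 2)‖ ^ 2)) := by
    rw [hP1, hP2, hP3, hP4, hM1, hM2, hM3, hM4, hPsum, hMsum]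
    exact hle
  have hPt := ((lt_of_le_of_lt hPleM hMt.lt_top)).ne
  have hP1ne := ((lt_of_le_of_lt (le_add_right (le_add_right le_self_add)) hPt.lt_top)).ne
  have hP2ne := ((lt_of_le_of_lt (le_add_right (le_add_right le_add_self)) hPt.lt_top)).ne
  have hP3ne := ((lt_of_le_of_lt (le_add_right le_add_self) hPt.lt_top)).ne
  have hP4ne := ((lt_of_le_of_lt le_add_self hPt.lt_top)).ne
  have hP12ne := ENNReal.add_ne_top.mpr ⟨hP1ne, hP2ne⟩
  have hP123ne := ENNReal.add_ne_top.mpr ⟨hP12ne, hP3ne⟩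
  -- conversion of the Bochner integrals
  have conv : ∀ (F : (Fin 3 → ℝ) → ℝ), Measurable F → (∀ x, 0 ≤ F x) →
      ∫ x in Omega, F x = (∫⁻ x in Omega, ENNReal.ofReal (F x)).toReal := fun F hF h0 =>
    integral_eq_lintegral_of_nonneg_ae (ae_of_all _ h0) hF.aestronglyMeasurable
  have eM : normSqMinus hbar f₁ f₃ f₄ f₅
      = ((∫⁻ x in Omega, ENNReal.ofReal
          (‖((Real.exp (-(x 2) / hbar) : ℝ) : ℂ) * f₁ (x 0 + x 2, x 1)‖ ^ 2))
        + (∫⁻ x in Omega, ENNReal.ofReal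
          (‖((Real.exp (-(x 2) / hbar) : ℝ) : ℂ) * f₃ (x 0 + x 2, x 1 + x 2)‖ ^ 2))
        + (∫⁻ x in Omega, ENNReal.ofReal
          (‖((Real.exp (-(x 1) / hbar) : ℝ) : ℂ) * f₄ (x 0 - x 1, x 2 + x 1)‖ ^ 2))
        + (∫⁻ x in Omega, ENNReal.ofReal
          (‖((Real.exp (-(x 1) / hbar) : ℝ) : ℂ) * f₅ (x 0 - x 1, x 2)‖ ^ 2))).toReal := by
    rw [normSqMinus,
      conv _ (by fun_prop) (fun x => by positivity),
      conv _ (by fun_prop) (fun x => by positivity),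
      conv _ (by fun_prop) (fun x => by positivity),
      conv _ (by fun_prop) (fun x => by positivity),
      ENNReal.toReal_add hM123ne hM4ne, ENNReal.toReal_add hM12ne hM3ne,
      ENNReal.toReal_add hM1ne hM2ne]
  have eP : normSqPlus hbar θ₁ θ₂ μ f₁ f₃ f₄ f₅
      = ((∫⁻ x in Omega, ENNReal.ofReal
          (‖((Real.exp (-(x 1) / hbar) : ℝ) : ℂ) * g2fun hbar θ₁ θ₂ μ f₁ f₄ (x 0 - x 1, x 2)‖ ^ 2))
        + (∫⁻ x in Omega, ENNReal.ofReal
          (‖((Real.exp (-(x 1) / hbar) : ℝ) : ℂ) * g3fun hbar θ₁ μ f₃ f₅ (x 0 - x 1, x 2 + x 1)‖ ^ 2))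
        + (∫⁻ x in Omega, ENNReal.ofReal
          (‖((Real.exp (-(x 2) / hbar) : ℝ) : ℂ) * g4fun hbar θ₂ μ f₁ f₄ (x 0 + x 2, x 1 + x 2)‖ ^ 2))
        + (∫⁻ x in Omega, ENNReal.ofReal
          (‖((Real.exp (-(x 2) / hbar) : ℝ) : ℂ) * g6fun hbar θ₁ θ₂ μ f₃ f₅ (x 0 + x 2, x 1)‖ ^ 2))).toReal := by
    rw [normSqPlus,
      conv _ (by fun_prop) (fun x => by positivity),
      conv _ (by fun_prop) (fun x => by positivity),
      conv _ (by fun_prop) (fun x => by positivity),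
      conv _ (by fun_prop) (fun x => by positivity),
      ENNReal.toReal_add hP123ne hP4ne, ENNReal.toReal_add hP12ne hP3ne,
      ENNReal.toReal_add hP1ne hP2ne]
  constructor
  · rw [eP, eM]
    exact Real.sqrt_le_sqrt (ENNReal.toReal_mono hMt hPleM)
  · intro hμ1
    have heq : (∫⁻ u in Ioi (0:ℝ),
        (ENNReal.ofReal (hbar/2) * (∫⁻ a : ℝ, ENNReal.ofReal (‖g2fun hbar θ₁ θ₂ μ f₁ f₄ (a, u)‖^2))
          + ENNReal.ofReal (hbar/2 * (1 - Real.exp (-u/hbar)^2))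
              * (∫⁻ a : ℝ, ENNReal.ofReal (‖g3fun hbar θ₁ μ f₃ f₅ (a, u)‖^2))
          + ENNReal.ofReal (hbar/2 * (1 - Real.exp (-u/hbar)^2))
              * (∫⁻ a : ℝ, ENNReal.ofReal (‖g4fun hbar θ₂ μ f₁ f₄ (a, u)‖^2))
          + ENNReal.ofReal (hbar/2) * (∫⁻ a : ℝ, ENNReal.ofReal (‖g6fun hbar θ₁ θ₂ μ f₃ f₅ (a, u)‖^2))))
      = ∫⁻ u in Ioi (0:ℝ),
        (ENNReal.ofReal (hbar/2) * (∫⁻ a : ℝ, ENNReal.ofReal (‖f₁ (a, u)‖^2))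
          + ENNReal.ofReal (hbar/2 * (1 - Real.exp (-u/hbar)^2))
              * (∫⁻ a : ℝ, ENNReal.ofReal (‖f₃ (a, u)‖^2))
          + ENNReal.ofReal (hbar/2 * (1 - Real.exp (-u/hbar)^2))
              * (∫⁻ a : ℝ, ENNReal.ofReal (‖f₄ (a, u)‖^2))
          + ENNReal.ofReal (hbar/2) * (∫⁻ a : ℝ, ENNReal.ofReal (‖f₅ (a, u)‖^2))) := by
      refine lintegral_congr_ae ((ae_restrict_iff' measurableSet_Ioi).mpr (ae_of_all _ fun u hu => ?_))
      have hA := blockA_eq hhbar θ₁ θ₂ μ f₁ f₄ h1m h4m u hu (hμ1 u hu)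
      have hB := blockB_eq hhbar θ₁ θ₂ μ f₃ f₅ h3m h5m u hu (hμ1 u hu)
      dsimp only
      rw [hre, hre, hA, hB]
    rw [eP, eM]
    congr 1
    rw [hP1, hP2, hP3, hP4, hM1, hM2, hM3, hM4, hPsum, hMsum, heq]
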